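/- Any piecewise bilinear map φ : D → ℝ² on a rectangular grid whose Jacobian is positive definite at every point where it is defined is locally injective on each grid cell. -/

import Mathlib

open Matrix

/-- The Jacobian matrix at `p` of the bilinear map
`(x,y) ↦ A + B x + C y + D x y` (componentwise, with coefficients in `ℝ²`). -/
def bilinearJac (B C D : ℝ × ℝ) (p : ℝ × ℝ) : Matrix (Fin 2) (Fin 2) ℝ :=
  !![B.1 + D.1 * p.2, C.1 + D.1 * p.1; B.2 + D.2 * p.2, C.2 + D.2 * p.1]

open Filter Topology

lemma quad_of_posdef (B C D : ℝ × ℝ) (x : ℝ × ℝ)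
    (h : (bilinearJac B C D x + (bilinearJac B C D x)ᵀ).PosDef)
    (v1 v2 : ℝ) (hv : v1 ≠ 0 ∨ v2 ≠ 0) :
    0 < v1^2*(B.1+D.1*x.2) + v1*v2*(C.1+D.1*x.1+B.2+D.2*x.2) + v2^2*(C.2+D.2*x.1) := by
  have hv' : ![v1, v2] ≠ 0 := by
    intro h0
    rcases hv with hv | hv
    · exact hv (by simpa using congrFun h0 0)
    · exact hv (by simpa using congrFun h0 1)
  have h2 := h.dotProduct_mulVec_pos (x := ![v1,v2]) hv'
  simp [bilinearJac, dotProduct, mulVec, Fin.sum_univ_two, Matrix.add_apply,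
    Matrix.transpose_apply, Matrix.vecHead, Matrix.vecTail] at h2
  nlinarith [h2]

lemma det_of_posdef (B C D : ℝ × ℝ) (x : ℝ × ℝ)
    (h : (bilinearJac B C D x + (bilinearJac B C D x)ᵀ).PosDef) :
    (C.1 + D.1*x.1 + B.2 + D.2*x.2)^2 < 4*(B.1+D.1*x.2)*(C.2+D.2*x.1) := by
  have hd := h.det_pos
  rw [Matrix.det_fin_two] at hd
  simp [bilinearJac, Matrix.add_apply, Matrix.transpose_apply, Matrix.vecHead, Matrix.vecTail] at hd
  nlinarith [hd]

open Filter Topology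


/-- If the affine function `C2 + D2 * x1` is the "corner entry" of a family of
positive definite quadratic forms on an open rectangle, it is positive on the closed interval. -/
lemma key_endpoint (α α' β β' B1 B2 C1 C2 D1 D2 : ℝ) (hα : α < α') (hβ : β < β')
    (hpA : ∀ x1 ∈ Set.Ioo α α', 0 < C2 + D2 * x1)
    (hdet : ∀ x1 ∈ Set.Ioo α α', ∀ x2 ∈ Set.Ioo β β',
      (C1 + D1*x1 + B2 + D2*x2)^2 < 4*(B1+D1*x2)*(C2+D2*x1)) :
    ∀ x1 ∈ Set.Icc α α', 0 < C2 + D2 * x1 := by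
  intro x1 hx1
  by_contra hle
  push_neg at hle
  have hcl : x1 ∈ closure (Set.Ioo α α') := by
    rwa [closure_Ioo hα.ne]
  have hnb : (𝓝[Set.Ioo α α'] x1).NeBot := mem_closure_iff_nhdsWithin_neBot.mp hcl
  have h0 : C2 + D2 * x1 = 0 := by
    refine le_antisymm hle ?_
    have ht : Tendsto (fun t => C2 + D2*t) (𝓝[Set.Ioo α α'] x1) (𝓝 (C2 + D2*x1)) :=
      ((continuous_const.add (continuous_const.mul continuous_id)).tendsto x1).mono_left
        nhdsWithin_le_nhds
    exact ge_of_tendsto ht (eventually_mem_nhdsWithin.mono (fun t htm => (hpA t htm).le))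
  have hL : ∀ x2 ∈ Set.Ioo β β', C1 + D1*x1 + B2 + D2*x2 = 0 := by
    intro x2 hx2
    have ht : Tendsto (fun t => 4*(B1+D1*x2)*(C2+D2*t) - (C1+D1*t+B2+D2*x2)^2)
        (𝓝[Set.Ioo α α'] x1)
        (𝓝 (4*(B1+D1*x2)*(C2+D2*x1) - (C1+D1*x1+B2+D2*x2)^2)) := by
      apply Tendsto.mono_left _ nhdsWithin_le_nhds
      exact Continuous.tendsto (by continuity) x1
    have hge : 0 ≤ 4*(B1+D1*x2)*(C2+D2*x1) - (C1+D1*x1+B2+D2*x2)^2 :=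
      ge_of_tendsto ht (eventually_mem_nhdsWithin.mono
        (fun t htm => by linarith [hdet t htm x2 hx2]))
    have hz : 4*(B1+D1*x2)*(C2+D2*x1) = 0 := by rw [h0]; ring
    have hsq : (C1+D1*x1+B2+D2*x2)^2 = 0 :=
      le_antisymm (by linarith) (sq_nonneg _)
    exact sq_eq_zero_iff.mp hsq
  have hy1 : β + (β'-β)/3 ∈ Set.Ioo β β' := by constructor <;> linarith
  have hy2 : β + (β'-β)/2 ∈ Set.Ioo β β' := by constructor <;> linarith
  have e1 := hL _ hy1
  have e2 := hL _ hy2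
  have h6 : D2 * ((β'-β)/6) = 0 := by linear_combination e2 - e1
  have hD2 : D2 = 0 := by
    rcases mul_eq_zero.mp h6 with h | h
    · exact h
    · exfalso; have : β' - β ≠ 0 := by linarith
      apply this; linarith
  have hmid := hpA ((α+α')/2) ⟨by linarith, by linarith⟩
  rw [hD2] at h0 hmid
  linarith

lemma scalar_main (α α' β β' B1 B2 C1 C2 D1 D2 p1 p2 q1 q2 : ℝ)
    (hα : α < α') (hβ : β < β')
    (hquad : ∀ x1 ∈ Set.Ioo α α', ∀ x2 ∈ Set.Ioo β β', ∀ v1 v2 : ℝ, (v1 ≠ 0 ∨ v2 ≠ 0) →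
      0 < v1^2*(B1+D1*x2) + v1*v2*(C1+D1*x1+B2+D2*x2) + v2^2*(C2+D2*x1))
    (hdet : ∀ x1 ∈ Set.Ioo α α', ∀ x2 ∈ Set.Ioo β β',
      (C1 + D1*x1 + B2 + D2*x2)^2 < 4*(B1+D1*x2)*(C2+D2*x1))
    (hp1 : p1 ∈ Set.Icc α α') (hp2 : p2 ∈ Set.Icc β β')
    (hq1 : q1 ∈ Set.Icc α α') (hq2 : q2 ∈ Set.Icc β β')
    (E1 : B1*p1 + C1*p2 + D1*(p1*p2) = B1*q1 + C1*q2 + D1*(q1*q2))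
    (E2 : B2*p1 + C2*p2 + D2*(p1*p2) = B2*q1 + C2*q2 + D2*(q1*q2)) :
    p1 = q1 ∧ p2 = q2 := by
  by_contra hne
  have hQ : (q1-p1)^2*(B1+D1*((p2+q2)/2)) +
      (q1-p1)*(q2-p2)*(C1+D1*((p1+q1)/2)+B2+D2*((p2+q2)/2)) +
      (q2-p2)^2*(C2+D2*((p1+q1)/2)) = 0 := by
    linear_combination (p1-q1)*E1 + (p2-q2)*E2
  by_cases h1 : q1 = p1
  · have h2 : q2 ≠ p2 := by
      intro h2; exact hne ⟨h1.symm, h2.symm⟩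
    have hpA : ∀ x1 ∈ Set.Ioo α α', 0 < C2 + D2 * x1 := by
      intro x1 hx1
      have := hquad x1 hx1 ((β+β')/2) ⟨by linarith, by linarith⟩ 0 1 (Or.inr one_ne_zero)
      nlinarith [this]
    have hc : 0 < C2 + D2 * ((p1+q1)/2) :=
      key_endpoint α α' β β' B1 B2 C1 C2 D1 D2 hα hβ hpA hdet ((p1+q1)/2)
        ⟨by linarith [hp1.1, hq1.1], by linarith [hp1.2, hq1.2]⟩
    have hsq : 0 < (q2-p2)^2 :=
      lt_of_le_of_ne (sq_nonneg _) (Ne.symm (pow_ne_zero 2 (sub_ne_zero.mpr h2)))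
    subst h1
    nlinarith [mul_pos hsq hc, hQ]
  · by_cases h2 : q2 = p2
    · have hpA : ∀ x2 ∈ Set.Ioo β β', 0 < B1 + D1 * x2 := by
        intro x2 hx2
        have := hquad ((α+α')/2) ⟨by linarith, by linarith⟩ x2 hx2 1 0 (Or.inl one_ne_zero)
        nlinarith [this]
      have hdet' : ∀ x2 ∈ Set.Ioo β β', ∀ x1 ∈ Set.Ioo α α',
          (B2 + D2*x2 + C1 + D1*x1)^2 < 4*(C2+D2*x1)*(B1+D1*x2) := by
        intro x2 hx2 x1 hx1
        have := hdet x1 hx1 x2 hx2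
        nlinarith [this]
      have hc : 0 < B1 + D1 * ((p2+q2)/2) :=
        key_endpoint β β' α α' C2 C1 B2 B1 D2 D1 hβ hα hpA hdet' ((p2+q2)/2)
          ⟨by linarith [hp2.1, hq2.1], by linarith [hp2.2, hq2.2]⟩
      have hsq : 0 < (q1-p1)^2 :=
        lt_of_le_of_ne (sq_nonneg _) (Ne.symm (pow_ne_zero 2 (sub_ne_zero.mpr h1)))
      subst h2
      nlinarith [mul_pos hsq hc, hQ]
    · have hm1 : (p1+q1)/2 ∈ Set.Ioo α α' := by
        constructor
        · rcases lt_or_eq_of_le hp1.1 with h | h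
          · linarith [hq1.1]
          · rcases lt_or_eq_of_le hq1.1 with h' | h'
            · linarith
            · exact absurd (h'.symm.trans h) h1
        · rcases lt_or_eq_of_le hp1.2 with h | h
          · linarith [hq1.2]
          · rcases lt_or_eq_of_le hq1.2 with h' | h'
            · linarith
            · exact absurd (h'.trans h.symm) h1
      have hm2 : (p2+q2)/2 ∈ Set.Ioo β β' := by
        constructor
        · rcases lt_or_eq_of_le hp2.1 with h | h
          · linarith [hq2.1]
          · rcases lt_or_eq_of_le hq2.1 with h' | h'
            · linarith
            · exact absurd (h'.symm.trans h) h2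
        · rcases lt_or_eq_of_le hp2.2 with h | h
          · linarith [hq2.2]
          · rcases lt_or_eq_of_le hq2.2 with h' | h'
            · linarith
            · exact absurd (h'.trans h.symm) h2
      have := hquad _ hm1 _ hm2 (q1-p1) (q2-p2) (Or.inl (sub_ne_zero.mpr h1))
      linarith [this, hQ]

/-- A piecewise bilinear map `φ : [0,1]² → ℝ²` on a rectangular grid whose Jacobian has
positive definite symmetric part at every interior point of each cell is (locally)
injective on each grid cell. -/
theorem piecewise_bilinear_posdef_jacobian_injective_on_cells
    (m r : ℕ) (hm : 0 < m) (hr : 0 < r)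
    (a : Fin (m + 1) → ℝ) (b : Fin (r + 1) → ℝ)
    (ha : StrictMono a) (hb : StrictMono b)
    (ha0 : a 0 = 0) (ha1 : a (Fin.last m) = 1) (hb0 : b 0 = 0) (hb1 : b (Fin.last r) = 1)
    (φ : ℝ × ℝ → ℝ × ℝ)
    (hφcont : ContinuousOn φ (Set.Icc (0 : ℝ) 1 ×ˢ Set.Icc (0 : ℝ) 1))
    (A B C D : Fin m → Fin r → ℝ × ℝ)
    (hbil : ∀ (i : Fin m) (j : Fin r),
      ∀ p ∈ Set.Icc (a i.castSucc) (a i.succ) ×ˢ Set.Icc (b j.castSucc) (b j.succ),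
        φ p = ((A i j).1 + (B i j).1 * p.1 + (C i j).1 * p.2 + (D i j).1 * p.1 * p.2,
               (A i j).2 + (B i j).2 * p.1 + (C i j).2 * p.2 + (D i j).2 * p.1 * p.2))
    (hpos : ∀ (i : Fin m) (j : Fin r),
      ∀ p ∈ interior (Set.Icc (a i.castSucc) (a i.succ) ×ˢ Set.Icc (b j.castSucc) (b j.succ)),
        (bilinearJac (B i j) (C i j) (D i j) p
          + (bilinearJac (B i j) (C i j) (D i j) p)ᵀ).PosDef) :
    ∀ (i : Fin m) (j : Fin r),
      Set.InjOn φ (Set.Icc (a i.castSucc) (a i.succ) ×ˢ Set.Icc (b j.castSucc) (b j.succ)) := by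
  intro i j p hp q hq heq
  have hαα : a i.castSucc < a i.succ := ha (Fin.castSucc_lt_succ (i := i))
  have hββ : b j.castSucc < b j.succ := hb (Fin.castSucc_lt_succ (i := j))
  have hint : interior (Set.Icc (a i.castSucc) (a i.succ) ×ˢ Set.Icc (b j.castSucc) (b j.succ))
      = Set.Ioo (a i.castSucc) (a i.succ) ×ˢ Set.Ioo (b j.castSucc) (b j.succ) := by
    rw [interior_prod_eq, interior_Icc, interior_Icc]
  have hquad : ∀ x1 ∈ Set.Ioo (a i.castSucc) (a i.succ),
      ∀ x2 ∈ Set.Ioo (b j.castSucc) (b j.succ), ∀ v1 v2 : ℝ, (v1 ≠ 0 ∨ v2 ≠ 0) →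
      0 < v1^2*((B i j).1+(D i j).1*x2) + v1*v2*((C i j).1+(D i j).1*x1+(B i j).2+(D i j).2*x2)
        + v2^2*((C i j).2+(D i j).2*x1) := by
    intro x1 hx1 x2 hx2 v1 v2 hv
    exact quad_of_posdef _ _ _ (x1, x2)
      (hpos i j (x1, x2) (by rw [hint]; exact ⟨hx1, hx2⟩)) v1 v2 hv
  have hdet : ∀ x1 ∈ Set.Ioo (a i.castSucc) (a i.succ),
      ∀ x2 ∈ Set.Ioo (b j.castSucc) (b j.succ),
      ((C i j).1 + (D i j).1*x1 + (B i j).2 + (D i j).2*x2)^2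
        < 4*((B i j).1+(D i j).1*x2)*((C i j).2+(D i j).2*x1) := by
    intro x1 hx1 x2 hx2
    exact det_of_posdef _ _ _ (x1, x2) (hpos i j (x1, x2) (by rw [hint]; exact ⟨hx1, hx2⟩))
  rw [hbil i j p hp, hbil i j q hq] at heq
  have E1 := congrArg Prod.fst heq
  have E2 := congrArg Prod.snd heq
  simp only at E1 E2
  obtain ⟨e1, e2⟩ := scalar_main (a i.castSucc) (a i.succ) (b j.castSucc) (b j.succ)
    (B i j).1 (B i j).2 (C i j).1 (C i j).2 (D i j).1 (D i j).2 p.1 p.2 q.1 q.2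
    hαα hββ hquad hdet hp.1 hp.2 hq.1 hq.2 (by linarith [E1]) (by linarith [E2])
  exact Prod.ext e1 e2
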